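/- Let L be a generalized Lagrangian, i.e., a map L from compactly supported smooth functions f on M to functionals on a set U of field configurations, satisfying (1) supp(L(f)) ⊆ supp f (space-time support) and (2) L(f₁ + f₂ + f₃) = L(f₁ + f₂) − L(f₂) + L(f₂ + f₃) whenever supp f₁ ∩ supp f₃ = ∅. Then the relative Lagrangian L_{f₀}(f) := L(f₀ + f) − L(f₀) satisfies supp(L_{f₀}(f)) ⊆ supp f for all f, f₀. -/

import Mathlib

/-- The space-time support of a functional `F` defined on a set `U` of field
configurations. -/
def spacetimeSupport {M : Type*} [TopologicalSpace M]
    (U : Set (M → ℝ)) (F : (M → ℝ) → ℂ) : Set M :=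
  {p | ∀ V ∈ nhds p, ∃ ψ ∈ U, ∃ φ : M → ℝ,
    ψ + φ ∈ U ∧ tsupport φ ⊆ V ∧ F (ψ + φ) ≠ F ψ}

/-- A generalized Lagrangian `L` (space-time support of `L f` contained in
`supp f`, additive in the support function) has relative Lagrangians
`L_{f₀}(f) = L(f₀ + f) − L(f₀)` with space-time support contained in `supp f`. -/
theorem spacetimeSupport_relativeLagrangian {M : Type*} [TopologicalSpace M]
    [T2Space M] [LocallyCompactSpace M] [NormalSpace M]
    (U : Set (M → ℝ)) (L : (M → ℝ) → ((M → ℝ) → ℂ))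
    (hsupp : ∀ f : M → ℝ, Continuous f → HasCompactSupport f →
      spacetimeSupport U (L f) ⊆ tsupport f)
    (hadd : ∀ f₁ f₂ f₃ : M → ℝ,
      Continuous f₁ → HasCompactSupport f₁ →
      Continuous f₂ → HasCompactSupport f₂ →
      Continuous f₃ → HasCompactSupport f₃ →
      Disjoint (tsupport f₁) (tsupport f₃) →
      ∀ φ, L (f₁ + f₂ + f₃) φ = L (f₁ + f₂) φ - L f₂ φ + L (f₂ + f₃) φ) :
    ∀ f f₀ : M → ℝ, Continuous f → HasCompactSupport f →
      Continuous f₀ → HasCompactSupport f₀ →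
      spacetimeSupport U (fun φ => L (f₀ + f) φ - L f₀ φ) ⊆ tsupport f := by
  intro f f₀ hf hfc hf0 hf0c p hp
  by_contra hpf
  -- compact neighborhood K of p inside (tsupport f)ᶜ
  obtain ⟨K, hKnhds, hKsub, hKcomp⟩ :=
    LocallyCompactSpace.local_compact_nhds p (tsupport f)ᶜ
      ((isClosed_tsupport f).isOpen_compl.mem_nhds hpf)
  -- separate K and tsupport f by disjoint opens u, v
  have hKclosed : IsClosed K := hKcomp.isClosed
  obtain ⟨u, v, hu, hv, hKu, hfv, huv⟩ :=
    NormalSpace.normal K (tsupport f) hKclosed (isClosed_tsupport f)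
      (Set.disjoint_left.mpr fun x hxK hxf => hKsub hxK hxf)
  -- bump function χ : 1 on K, 0 on uᶜ (hence on v)
  obtain ⟨χ, hχ1, hχ0, hχc, -⟩ :=
    exists_continuous_one_zero_of_isCompact hKcomp hu.isClosed_compl
      (Set.disjoint_compl_right_iff_subset.mpr hKu)
  have hχv : ∀ x ∈ v, χ x = 0 := fun x hx =>
    hχ0 (Set.disjoint_right.mp huv hx)
  set h : M → ℝ := f₀ * (1 - ⇑χ) with hh_def
  set k : M → ℝ := f₀ * ⇑χ with hk_def
  have hhcont : Continuous h := hf0.mul (continuous_const.sub χ.continuous)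
  have hkcont : Continuous k := hf0.mul χ.continuous
  have hhcs : HasCompactSupport h := hf0c.mul_right
  have hkcs : HasCompactSupport k := hf0c.mul_right
  have hgcont : Continuous (f + h) := hf.add hhcont
  have hgcs : HasCompactSupport (f + h) := hfc.add hhcs
  -- tsupport k ⊆ vᶜ, so disjoint from tsupport f
  have hkv : tsupport k ⊆ vᶜ := by
    apply closure_minimal _ hv.isClosed_compl
    intro x hx hxv
    exact hx (by simp [hk_def, hχv x hxv])
  have hdisj : Disjoint (tsupport f) (tsupport k) :=
    Set.disjoint_left.mpr fun x hx hx2 => hkv hx2 (hfv hx)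
  -- h + k = f₀
  have hhk : h + k = f₀ := by
    funext x; simp [hh_def, hk_def]; ring
  -- key identity
  have key : ∀ ψ, L (f₀ + f) ψ - L f₀ ψ = L (f + h) ψ - L h ψ := by
    intro ψ
    have := hadd f h k hf hfc hhcont hhcs hkcont hkcs hdisj ψ
    rw [hhk, show f + h + k = f₀ + f by rw [add_assoc, hhk, add_comm]] at this
    rw [this]; ring
  -- p is not in tsupport h (χ = 1 on interior K ∋ p)
  have hpK : p ∈ interior K := mem_interior_iff_mem_nhds.mpr hKnhds
  have hph : p ∉ tsupport h := by
    intro hpt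
    have : tsupport h ⊆ (interior K)ᶜ := by
      apply closure_minimal _ isOpen_interior.isClosed_compl
      intro x hx hxK
      exact hx (by simp [hh_def, hχ1 (interior_subset hxK)])
    exact this hpt hpK
  have hpg : p ∉ tsupport (f + h) := fun hpt => by
    rcases tsupport_add f h hpt with h1 | h1
    exacts [hpf h1, hph h1]
  -- hence p not in the spacetime supports of L (f+h) and L h
  have hg' : p ∉ spacetimeSupport U (L (f + h)) :=
    fun hc => hpg (hsupp _ hgcont hgcs hc)
  have hh' : p ∉ spacetimeSupport U (L h) :=
    fun hc => hph (hsupp _ hhcont hhcs hc)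
  simp only [spacetimeSupport, Set.mem_setOf_eq, not_forall] at hg' hh'
  push_neg at hg' hh'
  obtain ⟨Wg, hWg, hWg'⟩ := hg'
  obtain ⟨Wh, hWh, hWh'⟩ := hh'
  obtain ⟨ψ, hψU, φ, hψφU, hφsupp, hne⟩ := hp (Wg ∩ Wh) (Filter.inter_mem hWg hWh)
  apply hne
  simp only [key]
  rw [hWg' ψ hψU φ hψφU (hφsupp.trans Set.inter_subset_left),
    hWh' ψ hψU φ hψφU (hφsupp.trans Set.inter_subset_right)]
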